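/- Let f1, f2 : ℝ → ℝ be C² functions and p1, p2 : ℝ → ℝ polynomial functions of degree at most 1; set u(x,y) = f1(x)·p1(y) + f2(y)·p2(x) and f = −Δu. Let P be the bilinear corner interpolant on the unit square of u, let s be the linear transfinite boundary interpolant on the unit square of u − P, and set B(x,y) = x(1−x)y(1−y). Let φ1, …, φM : ℝ² → ℝ be C² functions and let x¹, …, x^N be points of the open square (0,1)². Define J : ℝ^M → ℝ by J(ω) = Σ_{i=1}^N ( −Σ_{j=1}^M ω_j · Δ(B·φ_j)(x^i) − f(x^i) − Δs(x^i) − ΔP(x^i) )². If ω* is the unique minimizer of J over ℝ^M, then the RNN-BP solution û(x,y) = B(x,y)·Σ_{j=1}^M ω*_j·φ_j(x,y) + s(x,y) + P(x,y) satisfies û(x,y) = u(x,y) for all (x,y) ∈ [0,1]². -/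

import Mathlib

open Finset in
/-- The bilinear corner interpolant on the unit square. -/
noncomputable def bilinearCorner (u : ℝ → ℝ → ℝ) (x y : ℝ) : ℝ :=
  (1 - x) * (1 - y) * u 0 0 + (1 - x) * y * u 0 1 + x * (1 - y) * u 1 0 + x * y * u 1 1

/-- The linear transfinite boundary interpolant on the unit square. -/
noncomputable def linTransfinite (v : ℝ → ℝ → ℝ) (x y : ℝ) : ℝ :=
  (1 - x) * v 0 y + x * v 1 y + (1 - y) * v x 0 + y * v x 1

/-- Partial derivative in the first variable. -/
noncomputable def pdx (v : ℝ → ℝ → ℝ) (x y : ℝ) : ℝ := deriv (fun t => v t y) x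

/-- Partial derivative in the second variable. -/
noncomputable def pdy (v : ℝ → ℝ → ℝ) (x y : ℝ) : ℝ := deriv (fun t => v x t) y

/-- The two-dimensional Laplacian `Δv = ∂²v/∂x² + ∂²v/∂y²`. -/
noncomputable def lap (v : ℝ → ℝ → ℝ) (x y : ℝ) : ℝ :=
  pdx (pdx v) x y + pdy (pdy v) x y

private lemma sep_deriv (g h : ℝ → ℝ) (hg : Differentiable ℝ g)
    (c0 c1 d0 d1 e00 e10 e01 e11 : ℝ) (b a : ℝ) :
    deriv (fun t => g t * (c0 + c1 * b) + h b * (d0 + d1 * t)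
      + (e00 + e10 * t + e01 * b + e11 * (t * b))) a
    = deriv g a * (c0 + c1 * b) + (h b * d1 + e10 + e11 * b) := by
  have h1 : HasDerivAt (fun t => g t * (c0 + c1 * b)) (deriv g a * (c0 + c1 * b)) a :=
    (hg a).hasDerivAt.mul_const _
  have h2 : HasDerivAt (fun t : ℝ => h b * (d0 + d1 * t)) (h b * d1) a := by
    have h0 : HasDerivAt (fun t : ℝ => d0 + d1 * t) d1 a := by
      simpa using ((hasDerivAt_id a).const_mul d1).const_add d0
    simpa using h0.const_mul (h b)
  have h3 : HasDerivAt (fun t : ℝ => e00 + e10 * t + e01 * b + e11 * (t * b))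
      (e10 + e11 * b) a := by
    have hfun : (fun t : ℝ => e00 + e10 * t + e01 * b + e11 * (t * b))
        = fun t : ℝ => (e00 + e01 * b) + (e10 + e11 * b) * t := by
      funext t; ring
    rw [hfun]
    simpa using ((hasDerivAt_id a).const_mul (e10 + e11 * b)).const_add (e00 + e01 * b)
  have := ((h1.add h2).add h3).deriv
  exact this.trans (by ring)

private lemma second_deriv_aux (g : ℝ → ℝ) (hg' : Differentiable ℝ (deriv g))
    (K C : ℝ) (x : ℝ) :
    deriv (fun t => deriv g t * K + C) x = deriv (deriv g) x * K := by
  have := (((hg' x).hasDerivAt.mul_const K).add_const C).deriv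
  simpa using this

private lemma lap_sep (g h : ℝ → ℝ) (hg : ContDiff ℝ 2 g) (hh : ContDiff ℝ 2 h)
    (c0 c1 d0 d1 e00 e10 e01 e11 : ℝ) (x y : ℝ) :
    lap (fun a b => g a * (c0 + c1 * b) + h b * (d0 + d1 * a)
        + (e00 + e10 * a + e01 * b + e11 * (a * b))) x y
      = deriv (deriv g) x * (c0 + c1 * y) + deriv (deriv h) y * (d0 + d1 * x) := by
  have hgd : Differentiable ℝ g := hg.differentiable (by norm_num)
  have hhd : Differentiable ℝ h := hh.differentiable (by norm_num)
  have hgd' : Differentiable ℝ (deriv g) :=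
    ((contDiff_succ_iff_deriv.mp (show ContDiff ℝ (1+1) g by norm_num [hg])).2.2).differentiable
      one_ne_zero
  have hhd' : Differentiable ℝ (deriv h) :=
    ((contDiff_succ_iff_deriv.mp (show ContDiff ℝ (1+1) h by norm_num [hh])).2.2).differentiable
      one_ne_zero
  have hx : pdx (pdx (fun a b => g a * (c0 + c1 * b) + h b * (d0 + d1 * a)
        + (e00 + e10 * a + e01 * b + e11 * (a * b)))) x y
      = deriv (deriv g) x * (c0 + c1 * y) := by
    unfold pdx
    have h1 : (fun t => deriv (fun r => g r * (c0 + c1 * y) + h y * (d0 + d1 * r)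
        + (e00 + e10 * r + e01 * y + e11 * (r * y))) t)
        = fun t => deriv g t * (c0 + c1 * y) + (h y * d1 + e10 + e11 * y) := by
      funext t; exact sep_deriv g h hgd c0 c1 d0 d1 e00 e10 e01 e11 y t
    rw [h1]
    exact second_deriv_aux g hgd' _ _ x
  have hy : pdy (pdy (fun a b => g a * (c0 + c1 * b) + h b * (d0 + d1 * a)
        + (e00 + e10 * a + e01 * b + e11 * (a * b)))) x y
      = deriv (deriv h) y * (d0 + d1 * x) := by
    unfold pdy
    have h1 : (fun t => deriv (fun r => g x * (c0 + c1 * r) + h r * (d0 + d1 * x)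
        + (e00 + e10 * x + e01 * r + e11 * (x * r))) t)
        = fun t => deriv h t * (d0 + d1 * x) + (g x * c1 + e01 + e11 * x) := by
      funext t
      have h2 : (fun r => g x * (c0 + c1 * r) + h r * (d0 + d1 * x)
          + (e00 + e10 * x + e01 * r + e11 * (x * r)))
          = fun r => h r * (d0 + d1 * x) + g x * (c0 + c1 * r)
          + (e00 + e01 * r + e10 * x + e11 * (r * x)) := by
        funext r; ring
      rw [h2, sep_deriv h g hhd d0 d1 c0 c1 e00 e01 e10 e11 x t]
    rw [h1]
    exact second_deriv_aux h hhd' _ _ y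
  rw [lap, hx, hy]

/-- Theorem 2.2: exactness of the RNN-BP method for the Poisson equation for solutions of
the form `f1(x)p1(y) + f2(y)p2(x)` with `deg p1, deg p2 ≤ 1`. -/
theorem rnnBP_exact_poisson
    (M N : ℕ)
    (f1 f2 : ℝ → ℝ) (hf1 : ContDiff ℝ 2 f1) (hf2 : ContDiff ℝ 2 f2)
    (p1 p2 : Polynomial ℝ) (hp1 : p1.degree ≤ 1) (hp2 : p2.degree ≤ 1)
    (u : ℝ → ℝ → ℝ)
    (hu : ∀ x y : ℝ, u x y = f1 x * p1.eval y + f2 y * p2.eval x)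
    (f : ℝ → ℝ → ℝ) (hf : ∀ x y : ℝ, f x y = -(lap u x y))
    (P : ℝ → ℝ → ℝ) (hP : ∀ x y : ℝ, P x y = bilinearCorner u x y)
    (s : ℝ → ℝ → ℝ)
    (hs : ∀ x y : ℝ, s x y = linTransfinite (fun a b => u a b - P a b) x y)
    (B : ℝ → ℝ → ℝ) (hB : ∀ x y : ℝ, B x y = x * (1 - x) * y * (1 - y))
    (φ : Fin M → ℝ → ℝ → ℝ)
    (hφ : ∀ j, ContDiff ℝ 2 (fun p : ℝ × ℝ => φ j p.1 p.2))
    (pt : Fin N → ℝ × ℝ)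
    (hpt : ∀ i, pt i ∈ Set.Ioo (0 : ℝ) 1 ×ˢ Set.Ioo (0 : ℝ) 1)
    (J : (Fin M → ℝ) → ℝ)
    (hJ : ∀ ω : Fin M → ℝ, J ω =
      ∑ i : Fin N,
        (-(∑ j : Fin M, ω j * lap (fun a b => B a b * φ j a b) (pt i).1 (pt i).2)
          - f (pt i).1 (pt i).2 - lap s (pt i).1 (pt i).2 - lap P (pt i).1 (pt i).2) ^ 2)
    (ωstar : Fin M → ℝ)
    (hmin : ∀ ω : Fin M → ℝ, ω ≠ ωstar → J ωstar < J ω) :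
    ∀ x ∈ Set.Icc (0 : ℝ) 1, ∀ y ∈ Set.Icc (0 : ℝ) 1,
      B x y * (∑ j : Fin M, ωstar j * φ j x y) + s x y + P x y = u x y := by
  -- affine expansions of the degree-≤-1 polynomials
  have hd1 : p1.natDegree < 2 :=
    Nat.lt_succ_of_le (Polynomial.natDegree_le_iff_degree_le.mpr hp1)
  have hd2 : p2.natDegree < 2 :=
    Nat.lt_succ_of_le (Polynomial.natDegree_le_iff_degree_le.mpr hp2)
  have he1 : ∀ t : ℝ, p1.eval t = p1.coeff 0 + p1.coeff 1 * t := by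
    intro t
    rw [Polynomial.eval_eq_sum_range' hd1]
    simp [Finset.sum_range_succ]
  have he2 : ∀ t : ℝ, p2.eval t = p2.coeff 0 + p2.coeff 1 * t := by
    intro t
    rw [Polynomial.eval_eq_sum_range' hd2]
    simp [Finset.sum_range_succ]
  set a0 := p1.coeff 0; set a1 := p1.coeff 1
  set b0 := p2.coeff 0; set b1 := p2.coeff 1
  -- closed forms
  have huform : u = fun a b => f1 a * (a0 + a1 * b) + f2 b * (b0 + b1 * a)
      + ((0:ℝ) + 0 * a + 0 * b + 0 * (a * b)) := by
    funext a b; rw [hu, he1, he2]; ring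
  have hPform : P = fun a b => (fun _ : ℝ => (0:ℝ)) a * ((0:ℝ) + 0 * b)
      + (fun _ : ℝ => (0:ℝ)) b * ((0:ℝ) + 0 * a)
      + (u 0 0 + (u 1 0 - u 0 0) * a + (u 0 1 - u 0 0) * b
        + (u 0 0 + u 1 1 - u 1 0 - u 0 1) * (a * b)) := by
    funext a b; rw [hP, bilinearCorner]; ring
  have hsform : s = fun a b => f1 a * (a0 + a1 * b) + f2 b * (b0 + b1 * a)
      + (-(u 0 0) + (u 0 0 - u 1 0) * a + (u 0 0 - u 0 1) * b
        + (u 1 0 + u 0 1 - u 0 0 - u 1 1) * (a * b)) := by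
    funext a b
    simp only [hs, linTransfinite, hP, bilinearCorner, hu, he1, he2]
    ring
  -- Laplacians
  have hlapu : ∀ x y : ℝ, lap u x y
      = deriv (deriv f1) x * (a0 + a1 * y) + deriv (deriv f2) y * (b0 + b1 * x) := by
    intro x y; rw [huform]; exact lap_sep f1 f2 hf1 hf2 _ _ _ _ _ _ _ _ x y
  have hlaps : ∀ x y : ℝ, lap s x y
      = deriv (deriv f1) x * (a0 + a1 * y) + deriv (deriv f2) y * (b0 + b1 * x) := by
    intro x y; rw [hsform]; exact lap_sep f1 f2 hf1 hf2 _ _ _ _ _ _ _ _ x y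
  have hlapP : ∀ x y : ℝ, lap P x y = 0 := by
    intro x y
    rw [hPform, lap_sep (fun _ => 0) (fun _ => 0) contDiff_const contDiff_const
      _ _ _ _ _ _ _ _ x y]
    simp
  -- the residual at ω = 0 vanishes
  have hres : ∀ x y : ℝ, - f x y - lap s x y - lap P x y = 0 := by
    intro x y; rw [hf, hlaps, hlapu, hlapP]; ring
  have hJ0 : J 0 = 0 := by
    rw [hJ]
    apply Finset.sum_eq_zero
    intro i _
    have h0 : (∑ j : Fin M, (0 : Fin M → ℝ) j
        * lap (fun a b => B a b * φ j a b) (pt i).1 (pt i).2) = 0 := by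
      simp
    rw [h0]
    have := hres (pt i).1 (pt i).2
    rw [neg_zero]
    nlinarith [this]
  have hJs : 0 ≤ J ωstar := by
    rw [hJ]
    exact Finset.sum_nonneg fun i _ => sq_nonneg _
  have hω : ωstar = 0 := by
    by_contra hne
    have := hmin 0 (fun h => hne h.symm)
    rw [hJ0] at this
    linarith
  intro x _ y _
  rw [hω]
  simp only [Pi.zero_apply, zero_mul, Finset.sum_const_zero, mul_zero, zero_add]
  simp only [hs, linTransfinite, hP, bilinearCorner, hu, he1, he2]
  ring
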